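/- Let (Z, U) with Z ∈ ℂ^{ℓ×ℓ}, U ∈ ℂ^{ℓ×n} be a left invariant pair of P(z) = P0 + P1·z + P2·z² (i.e., U·P0 + Z·U·P1 + Z²·U·P2 = 0 and [U, Z·U] has full row rank ℓ), let α, β, γ, δ ∈ ℂ with αδ − βγ ≠ 0, and suppose γ·Z + δ·I is invertible. Set Y = (α·Z + β·I)·(γ·Z + δ·I)⁻¹ and F0 = α²·P0 − αβ·P1 + β²·P2, F1 = −2αγ·P0 + (αδ + βγ)·P1 − 2βδ·P2, F2 = γ²·P0 − γδ·P1 + δ²·P2. Then U·F0 + Y·U·F1 + Y²·U·F2 = 0 and [U, Y·U] has full row rank ℓ; i.e., (Y, U) is a left invariant pair of F(y) = F0 + F1·y + F2·y². -/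

import Mathlib

open Matrix

/-- A left invariant pair `(Z, U)` of `P(z) = P0 + P1 z + P2 z²` is transformed by a Möbius
map with `γZ + δI` invertible into a left invariant pair `(Y, U)`, `Y = (αZ + βI)(γZ + δI)⁻¹`,
of the transformed quadratic `F(y) = F0 + F1 y + F2 y²`. -/
theorem left_invariant_pair_moebius {n ℓ : ℕ}
    (P0 P1 P2 : Matrix (Fin n) (Fin n) ℂ)
    (Z : Matrix (Fin ℓ) (Fin ℓ) ℂ) (U : Matrix (Fin ℓ) (Fin n) ℂ)
    (heq : U * P0 + Z * U * P1 + Z ^ 2 * U * P2 = 0)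
    (hrank : (Matrix.fromCols U (Z * U)).rank = ℓ)
    (α β γ δ : ℂ) (hdet : α * δ - β * γ ≠ 0)
    (hZinv : IsUnit (γ • Z + δ • (1 : Matrix (Fin ℓ) (Fin ℓ) ℂ)).det)
    (Y : Matrix (Fin ℓ) (Fin ℓ) ℂ)
    (hY : Y = (α • Z + β • (1 : Matrix (Fin ℓ) (Fin ℓ) ℂ)) *
      (γ • Z + δ • (1 : Matrix (Fin ℓ) (Fin ℓ) ℂ))⁻¹)
    (F0 F1 F2 : Matrix (Fin n) (Fin n) ℂ)
    (hF0 : F0 = (α ^ 2) • P0 - (α * β) • P1 + (β ^ 2) • P2)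
    (hF1 : F1 = (-(2 * α * γ)) • P0 + (α * δ + β * γ) • P1 - (2 * β * δ) • P2)
    (hF2 : F2 = (γ ^ 2) • P0 - (γ * δ) • P1 + (δ ^ 2) • P2) :
    U * F0 + Y * U * F1 + Y ^ 2 * U * F2 = 0 ∧
      (Matrix.fromCols U (Y * U)).rank = ℓ := by
  set A : Matrix (Fin ℓ) (Fin ℓ) ℂ := α • Z + β • 1 with hA
  set B : Matrix (Fin ℓ) (Fin ℓ) ℂ := γ • Z + δ • 1 with hB
  have hABcomm : A * B = B * A := by
    rw [hA, hB]
    simp only [Matrix.add_mul, Matrix.mul_add, Matrix.smul_mul, Matrix.mul_smul, smul_smul,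
      Matrix.mul_one, Matrix.one_mul]
    module
  have hBBinv : B * B⁻¹ = 1 := Matrix.mul_nonsing_inv B hZinv
  have hBY : B * Y = A := by
    rw [hY, ← Matrix.mul_assoc, ← hABcomm, Matrix.mul_assoc, hBBinv, Matrix.mul_one]
  have key : B * B * U * F0 + B * A * U * F1 + A * A * U * F2 =
      (α * δ - β * γ) ^ 2 • (U * P0 + Z * U * P1 + Z ^ 2 * U * P2) := by
    rw [hF0, hF1, hF2, hA, hB]
    simp only [Matrix.add_mul, Matrix.mul_add, Matrix.mul_sub, Matrix.sub_mul,
      Matrix.smul_mul, Matrix.mul_smul, smul_smul, Matrix.mul_one, Matrix.one_mul,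
      smul_add, smul_sub, pow_two, Matrix.mul_assoc]
    module
  rw [heq, smul_zero] at key
  have hzero : U * F0 + Y * U * F1 + Y ^ 2 * U * F2 = 0 := by
    have e1 : B * B * (Y * U * F1) = B * A * U * F1 := by
      calc B * B * (Y * U * F1) = B * (B * Y) * U * F1 := by
            simp only [Matrix.mul_assoc]
        _ = B * A * U * F1 := by rw [hBY]
    have e2 : B * B * (Y ^ 2 * U * F2) = A * A * U * F2 := by
      calc B * B * (Y ^ 2 * U * F2) = B * ((B * Y) * (Y * (U * F2))) := by
            simp only [pow_two, Matrix.mul_assoc]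
        _ = B * (A * (Y * (U * F2))) := by rw [hBY]
        _ = (B * A) * (Y * (U * F2)) := by rw [Matrix.mul_assoc]
        _ = (A * B) * (Y * (U * F2)) := by rw [hABcomm]
        _ = A * ((B * Y) * (U * F2)) := by simp only [Matrix.mul_assoc]
        _ = A * A * U * F2 := by rw [hBY]; simp only [Matrix.mul_assoc]
    have h2 : B * B * (U * F0 + Y * U * F1 + Y ^ 2 * U * F2) = 0 := by
      rw [Matrix.mul_add, Matrix.mul_add, e1, e2, ← Matrix.mul_assoc, key]
    have hu : IsUnit (B * B).det := by rw [Matrix.det_mul]; exact hZinv.mul hZinv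
    calc U * F0 + Y * U * F1 + Y ^ 2 * U * F2
        = (B * B)⁻¹ * (B * B * (U * F0 + Y * U * F1 + Y ^ 2 * U * F2)) := by
          rw [← Matrix.mul_assoc, Matrix.nonsing_inv_mul _ hu, Matrix.one_mul]
      _ = 0 := by rw [h2, Matrix.mul_zero]
  refine ⟨hzero, ?_⟩
  set M : Matrix (Fin n ⊕ Fin n) (Fin n ⊕ Fin n) ℂ :=
    Matrix.fromBlocks (δ • 1) (β • 1) (γ • 1) (α • 1) with hM
  have hMdet : IsUnit M.det := by
    apply Matrix.isUnit_det_of_right_inverse (B := (α * δ - β * γ)⁻¹ •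
      Matrix.fromBlocks (α • 1) ((-β) • 1) ((-γ) • 1) (δ • 1))
    rw [hM, Matrix.mul_smul, Matrix.fromBlocks_multiply]
    rw [show (δ • (1 : Matrix (Fin n) (Fin n) ℂ)) * (α • 1) + (β • 1) * ((-γ) • 1)
        = (α * δ - β * γ) • 1 from by
      simp only [Matrix.smul_mul, Matrix.mul_smul, smul_smul, Matrix.mul_one]; module]
    rw [show (δ • (1 : Matrix (Fin n) (Fin n) ℂ)) * ((-β) • 1) + (β • 1) * (δ • 1)
        = 0 from by
      simp only [Matrix.smul_mul, Matrix.mul_smul, smul_smul, Matrix.mul_one]; module]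
    rw [show (γ • (1 : Matrix (Fin n) (Fin n) ℂ)) * (α • 1) + (α • 1) * ((-γ) • 1)
        = 0 from by
      simp only [Matrix.smul_mul, Matrix.mul_smul, smul_smul, Matrix.mul_one]; module]
    rw [show (γ • (1 : Matrix (Fin n) (Fin n) ℂ)) * ((-β) • 1) + (α • 1) * (δ • 1)
        = (α * δ - β * γ) • 1 from by
      simp only [Matrix.smul_mul, Matrix.mul_smul, smul_smul, Matrix.mul_one]; module]
    rw [show (0 : Matrix (Fin n) (Fin n) ℂ) = (α * δ - β * γ) • 0 from by rw [smul_zero]]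
    rw [← Matrix.fromBlocks_smul, smul_smul, inv_mul_cancel₀ hdet, one_smul,
      Matrix.fromBlocks_one]
  have hBYU : B * (Y * U) = A * U := by rw [← Matrix.mul_assoc, hBY]
  have hcols : B * Matrix.fromCols U (Y * U) = Matrix.fromCols U (Z * U) * M := by
    rw [Matrix.mul_fromCols, hBYU, hM, Matrix.fromCols_mul_fromBlocks, hA, hB]
    simp only [Matrix.mul_smul, Matrix.smul_mul, Matrix.add_mul, Matrix.mul_one,
      Matrix.one_mul]
    rw [add_comm (δ • U), add_comm (β • U)]
  have : (B * Matrix.fromCols U (Y * U)).rank = ℓ := by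
    rw [hcols, Matrix.rank_mul_eq_left_of_isUnit_det _ _ hMdet, hrank]
  rwa [Matrix.rank_mul_eq_right_of_isUnit_det _ _ hZinv] at this
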